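/- Let N be a positive integer and let a₁, …, a_m : ZMod N → ℂ be filters whose discrete Fourier transforms satisfy ∑_{i=1}^m |â_i(k)|² = 1 for every frequency k ∈ ZMod N. Then for all x, y : ZMod N → ℂ: ∑_{t ∈ ZMod N} x(t) · conj(y(t)) = ∑_{i=1}^m ∑_{t ∈ ZMod N} (a_i ⋆ x)(t) · conj((a_i ⋆ y)(t)). That is, a filter bank whose squared gain functions sum to one at every discrete frequency exactly preserves cross-products (realized covariance equals the sum over filter outputs of the filtered cross-products). -/

import Mathlib

open Complex Finset

/-- The discrete Fourier transform `â(k) = ∑_t a(t) e^{−2πi k t / N}`. -/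
noncomputable def dft {N : ℕ} [NeZero N] (a : ZMod N → ℂ) (k : ZMod N) : ℂ :=
  ∑ t : ZMod N, a t * Complex.exp (-(2 * (Real.pi : ℂ) * k.val * t.val / N) * Complex.I)

/-- Circular convolution `(a ⋆ x)(t) = ∑_s a(s) x(t − s)`. -/
noncomputable def cconv {N : ℕ} [NeZero N] (a x : ZMod N → ℂ) (t : ZMod N) : ℂ :=
  ∑ s : ZMod N, a s * x (t - s)

namespace FBaux

variable {N : ℕ} [NeZero N]

lemma exp_eq_char (k t : ZMod N) :
    Complex.exp (-(2 * (Real.pi : ℂ) * k.val * t.val / N) * Complex.I)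
      = ZMod.stdAddChar (-(k * t)) := by
  have h : (-(k * t) : ZMod N) = ((-(k.val * t.val : ℤ) : ℤ) : ZMod N) := by
    push_cast [ZMod.natCast_val, ZMod.intCast_zmod_cast]
    simp [ZMod.natCast_val, ZMod.cast_id]
  rw [h, ZMod.stdAddChar_coe]
  congr 1
  push_cast
  ring

lemma dft_eq (a : ZMod N → ℂ) (k : ZMod N) :
    dft a k = ∑ t : ZMod N, a t * ZMod.stdAddChar (-(k * t)) := by
  unfold dft
  refine Finset.sum_congr rfl fun t _ => ?_
  rw [exp_eq_char]

lemma conj_char (u : ZMod N) :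
    (starRingEnd ℂ) (ZMod.stdAddChar u) = ZMod.stdAddChar (-u) := by
  have hnorm : ‖(ZMod.stdAddChar u : ℂ)‖ = 1 := by
    rw [ZMod.stdAddChar_apply]; exact Circle.norm_coe _
  have hmul : ZMod.stdAddChar u * ZMod.stdAddChar (-u) = 1 := by
    rw [← AddChar.map_add_eq_mul]; simp
  rw [← Complex.inv_eq_conj hnorm]
  exact inv_eq_of_mul_eq_one_right hmul

lemma char_orth (u : ZMod N) :
    ∑ k : ZMod N, ZMod.stdAddChar (k * u) = if u = 0 then (N : ℂ) else 0 := by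
  split_ifs with h
  · simp [h]
  · have := AddChar.sum_eq_zero_of_ne_one (ZMod.isPrimitive_stdAddChar N h)
    simpa [AddChar.mulShift_apply, mul_comm] using this

/-- Convolution theorem. -/
lemma dft_cconv (a x : ZMod N → ℂ) (k : ZMod N) :
    dft (cconv a x) k = dft a k * dft x k := by
  simp only [dft_eq, cconv, Finset.sum_mul]
  rw [Finset.sum_comm]
  refine Finset.sum_congr rfl fun s _ => ?_
  rw [Finset.mul_sum,
    ← Equiv.sum_comp (Equiv.addRight s) (fun t => a s * x (t - s) * ZMod.stdAddChar (-(k * t)))]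
  refine Finset.sum_congr rfl fun u _ => ?_
  simp only [Equiv.coe_addRight]
  have h1 : (u + s - s : ZMod N) = u := by ring
  have h2 : (-(k * (u + s)) : ZMod N) = -(k * s) + -(k * u) := by ring
  rw [h1, h2, AddChar.map_add_eq_mul]
  ring

/-- Parseval / Plancherel. -/
lemma parseval (f g : ZMod N → ℂ) :
    ∑ k : ZMod N, dft f k * (starRingEnd ℂ) (dft g k)
      = (N : ℂ) * ∑ t : ZMod N, f t * (starRingEnd ℂ) (g t) := by
  have key : ∀ t s : ZMod N,
      ∑ k : ZMod N,
        f t * ZMod.stdAddChar (-(k * t)) * ((starRingEnd ℂ) (g s) * ZMod.stdAddChar (k * s))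
      = f t * (starRingEnd ℂ) (g s) * (if (s - t : ZMod N) = 0 then (N : ℂ) else 0) := by
    intro t s
    rw [← char_orth (s - t), Finset.mul_sum]
    refine Finset.sum_congr rfl fun k _ => ?_
    have h2 : (k * (s - t) : ZMod N) = -(k * t) + k * s := by ring
    rw [h2, AddChar.map_add_eq_mul]
    ring
  calc ∑ k : ZMod N, dft f k * (starRingEnd ℂ) (dft g k)
      = ∑ k : ZMod N, ∑ t : ZMod N, ∑ s : ZMod N,
          f t * ZMod.stdAddChar (-(k * t)) * ((starRingEnd ℂ) (g s) * ZMod.stdAddChar (k * s)) := by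
        refine Finset.sum_congr rfl fun k _ => ?_
        rw [dft_eq, dft_eq, map_sum, Finset.sum_mul]
        refine Finset.sum_congr rfl fun t _ => ?_
        rw [Finset.mul_sum]
        refine Finset.sum_congr rfl fun s _ => ?_
        rw [map_mul, conj_char, neg_neg]
    _ = ∑ t : ZMod N, ∑ s : ZMod N, ∑ k : ZMod N,
          f t * ZMod.stdAddChar (-(k * t)) * ((starRingEnd ℂ) (g s) * ZMod.stdAddChar (k * s)) := by
        rw [Finset.sum_comm]
        exact Finset.sum_congr rfl fun t _ => Finset.sum_comm
    _ = ∑ t : ZMod N, ∑ s : ZMod N,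
          f t * (starRingEnd ℂ) (g s) * (if (s - t : ZMod N) = 0 then (N : ℂ) else 0) := by
        exact Finset.sum_congr rfl fun t _ => Finset.sum_congr rfl fun s _ => key t s
    _ = ∑ t : ZMod N, (N : ℂ) * (f t * (starRingEnd ℂ) (g t)) := by
        refine Finset.sum_congr rfl fun t _ => ?_
        rw [Finset.sum_eq_single t]
        · simp [mul_comm]
        · intro s _ hs
          simp [sub_eq_zero, hs]
        · simp
    _ = (N : ℂ) * ∑ t : ZMod N, f t * (starRingEnd ℂ) (g t) := by rw [Finset.mul_sum]

end FBaux

/-- A filter bank whose squared gain functions sum to one at every discrete frequency exactly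
preserves cross-products: the realized covariance equals the sum over the filter outputs of
the filtered cross-products. -/
theorem filter_bank_preserves_cross_products (N : ℕ) [NeZero N] (m : ℕ)
    (a : Fin m → ZMod N → ℂ)
    (hgain : ∀ k : ZMod N, ∑ i : Fin m, ‖dft (a i) k‖ ^ 2 = 1)
    (x y : ZMod N → ℂ) :
    (∑ t : ZMod N, x t * (starRingEnd ℂ) (y t))
      = ∑ i : Fin m, ∑ t : ZMod N, cconv (a i) x t * (starRingEnd ℂ) (cconv (a i) y t) := by
  have hN : (N : ℂ) ≠ 0 := Nat.cast_ne_zero.mpr (NeZero.ne N)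
  have h1 : ∀ i : Fin m,
      ∑ t : ZMod N, cconv (a i) x t * (starRingEnd ℂ) (cconv (a i) y t)
      = (N : ℂ)⁻¹ * ∑ k : ZMod N,
          (dft (a i) k * (starRingEnd ℂ) (dft (a i) k)) * (dft x k * (starRingEnd ℂ) (dft y k)) := by
    intro i
    have hp := FBaux.parseval (cconv (a i) x) (cconv (a i) y)
    rw [eq_comm, ← eq_inv_mul_iff_mul_eq₀ hN] at hp
    rw [hp]
    congr 1
    refine Finset.sum_congr rfl fun k _ => ?_
    rw [FBaux.dft_cconv, FBaux.dft_cconv]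
    simp only [map_mul]
    ring
  rw [Finset.sum_congr rfl fun i _ => h1 i]
  rw [← Finset.mul_sum, Finset.sum_comm]
  have h2 : ∀ k : ZMod N,
      ∑ i : Fin m, (dft (a i) k * (starRingEnd ℂ) (dft (a i) k)) * (dft x k * (starRingEnd ℂ) (dft y k))
      = dft x k * (starRingEnd ℂ) (dft y k) := by
    intro k
    rw [← Finset.sum_mul]
    have hone : ∑ i : Fin m, dft (a i) k * (starRingEnd ℂ) (dft (a i) k) = 1 := by
      calc ∑ i : Fin m, dft (a i) k * (starRingEnd ℂ) (dft (a i) k)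
          = ∑ i : Fin m, ((‖dft (a i) k‖ ^ 2 : ℝ) : ℂ) := by
            refine Finset.sum_congr rfl fun i _ => ?_
            rw [Complex.mul_conj, Complex.normSq_eq_norm_sq]
        _ = ((∑ i : Fin m, ‖dft (a i) k‖ ^ 2 : ℝ) : ℂ) := by push_cast; ring
        _ = 1 := by rw [hgain k]; norm_num
    rw [hone, one_mul]
  rw [Finset.sum_congr rfl fun k _ => h2 k]
  rw [FBaux.parseval, ← mul_assoc, inv_mul_cancel₀ hN, one_mul]
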